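/- Let A_ρ ⊆ M_n(ℂ) be a structural matrix algebra and let φ : A_ρ → M_n(ℂ) be an injective map satisfying φ(X ∘ Y) = φ(X) ∘ φ(Y) for all X, Y ∈ A_ρ, where ∘ is the normalized Jordan product. If P₁,…,P_r ∈ A_ρ are mutually orthogonal idempotents and λ₁,…,λ_r ∈ ℂ, then φ(Σ_{j=1}^r λ_j P_j) = Σ_{j=1}^r φ(λ_j P_j). -/

import Mathlib

/-- The structural matrix algebra determined by a quasi-order `ρ` on `Fin n`. -/
def structuralMatrixAlgebra {n : ℕ} (ρ : Fin n → Fin n → Prop) :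
    Set (Matrix (Fin n) (Fin n) ℂ) :=
  {X | ∀ i j, ¬ ρ i j → X i j = 0}

/-- The normalized Jordan product `X ∘ Y = (1/2)(XY + YX)`. -/
noncomputable def njord {n : ℕ} (X Y : Matrix (Fin n) (Fin n) ℂ) : Matrix (Fin n) (Fin n) ℂ :=
  (1 / 2 : ℂ) • (X * Y + Y * X)

namespace SMAux

variable {n : ℕ}

local notation "𝕄" => Matrix (Fin n) (Fin n) ℂ

lemma idem_trace_nat {e : 𝕄} (he : e * e = e) :
    ∃ k : ℕ, e.trace = (k : ℂ) ∧ (k = 0 → e = 0) := by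
  set f := Matrix.toLin' e with hf
  have hff : f ∘ₗ f = f := by rw [hf, ← Matrix.toLin'_mul, he]
  obtain ⟨p, hp⟩ := (LinearMap.isProj_iff_isIdempotentElem f).mpr hff
  refine ⟨Module.finrank ℂ p, ?_, ?_⟩
  · have h1 : LinearMap.trace ℂ _ f = (Module.finrank ℂ p : ℂ) := hp.trace
    have h2 : LinearMap.trace ℂ _ f = Matrix.trace (LinearMap.toMatrix' f) := by
      rw [LinearMap.trace_eq_matrix_trace ℂ (Pi.basisFun ℂ (Fin n)) f,
        LinearMap.toMatrix_eq_toMatrix']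
    rw [hf, LinearMap.toMatrix'_toLin'] at h2
    rw [← h2, h1]
  · intro hk
    have hpbot : p = ⊥ := Submodule.finrank_eq_zero.mp hk
    have hf0 : f = 0 := by
      refine LinearMap.ext fun v => ?_
      have hv := hp.map_mem v
      rw [hpbot, Submodule.mem_bot] at hv
      simpa using hv
    have h3 : e = LinearMap.toMatrix' f := by rw [hf, LinearMap.toMatrix'_toLin']
    rw [h3, hf0]
    exact LinearMap.toMatrix'.map_zero

lemma dbl_cancel {x y : 𝕄} (h : x + x = y + y) : x = y := by
  have h2 : (2:ℂ) • x = (2:ℂ) • y := by rw [two_smul, two_smul]; exact h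
  have := congrArg (fun z => (1/2:ℂ) • z) h2
  simpa [smul_smul] using this

lemma half_add_self (x : 𝕄) : (1/2:ℂ) • (x + x) = x := by
  rw [← two_smul ℂ x, smul_smul]; norm_num

lemma njord_eq_iff {a b c : 𝕄} : njord a b = c ↔ a * b + b * a = c + c := by
  constructor
  · intro h
    rw [← h]
    simp only [njord]
    rw [← smul_add, half_add_self]
  · intro h
    show (1/2:ℂ) • (a*b + b*a) = c
    rw [h, half_add_self]

section Jord

private lemma k1 {u y : 𝕄} (hu : u * u = u) : u * (u*y + y*u) = u*y + u*y*u := by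
  rw [mul_add, ← mul_assoc, hu, ← mul_assoc]

private lemma k2 {u y : 𝕄} (hu : u * u = u) : (u*y + y*u) * u = u*y*u + y*u := by
  rw [add_mul, mul_assoc y u u, hu]

/-- If `u` is idempotent and `u*y + y*u = 0` then both products vanish. -/
lemma orth_of_jord_zero {u y : 𝕄} (hu : u * u = u) (h : u*y + y*u = 0) : u * y = 0 ∧ y * u = 0 := by
  have h1 : u*y + u*y*u = 0 := by rw [← k1 hu, h, mul_zero]
  have h2 : u*y*u + y*u = 0 := by rw [← k2 hu, h, zero_mul]
  have e1 : u*y = -(u*y*u) := eq_neg_of_add_eq_zero_left h1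
  have e2 : y*u = -(u*y*u) := eq_neg_of_add_eq_zero_right h2
  have hc : u*y = y*u := by rw [e1, e2]
  have h3 : u*y + u*y = 0 + 0 := by
    nth_rewrite 2 [hc]
    rw [add_zero]; exact h
  have h4 := dbl_cancel h3
  exact ⟨h4, hc ▸ h4⟩

/-- If `u` is idempotent and `u*y + y*u = y + y` then `u` acts as a unit on `y`. -/
lemma unit_of_jord_self {u y : 𝕄} (hu : u * u = u) (h : u*y + y*u = y + y) : u * y = y ∧ y * u = y := by
  have h1 : u*y + u*y*u = u*y + u*y := by rw [← k1 hu, h, mul_add]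
  have h2 : u*y*u + y*u = y*u + y*u := by rw [← k2 hu, h, add_mul]
  have e1 : u*y*u = u*y := add_left_cancel h1
  have e2 : u*y*u = y*u := add_right_cancel h2
  have hc : u*y = y*u := by rw [← e1, e2]
  have h3 : u*y + u*y = y + y := by nth_rewrite 2 [hc]; exact h
  have h4 := dbl_cancel h3
  exact ⟨h4, hc ▸ h4⟩

/-- If `u` is idempotent and `u*y + y*u = u + u` then `y` acts as a unit on `u`. -/
lemma corner_of_jord {u y : 𝕄} (hu : u * u = u) (h : u*y + y*u = u + u) : u * y = u ∧ y * u = u := by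
  have h1 : u*y + u*y*u = u + u := by rw [← k1 hu, h, mul_add, hu]
  have h2 : u*y*u + y*u = u + u := by rw [← k2 hu, h, add_mul, hu]
  have h5 : u*y + u*y*u = u*y*u + y*u := h1.trans h2.symm
  rw [add_comm (u*y*u) (y*u)] at h5
  have hc : u*y = y*u := add_right_cancel h5
  have h3 : u*y + u*y = u + u := by nth_rewrite 2 [hc]; exact h
  have h4 := dbl_cancel h3
  exact ⟨h4, hc ▸ h4⟩

end Jord


/-! ### Closure properties of the structural matrix algebra -/

lemma mem_zero (ρ : Fin n → Fin n → Prop) : (0:𝕄) ∈ structuralMatrixAlgebra ρ :=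
  fun _ _ _ => rfl

lemma mem_one {ρ : Fin n → Fin n → Prop} (hrefl : ∀ i, ρ i i) :
    (1:𝕄) ∈ structuralMatrixAlgebra ρ := by
  intro i j hij
  have hne : i ≠ j := fun h => hij (h ▸ hrefl i)
  exact Matrix.one_apply_ne hne

lemma mem_add {ρ : Fin n → Fin n → Prop} {X Y : 𝕄} (hX : X ∈ structuralMatrixAlgebra ρ)
    (hY : Y ∈ structuralMatrixAlgebra ρ) : X + Y ∈ structuralMatrixAlgebra ρ := by
  intro i j hij
  simp [Matrix.add_apply, hX i j hij, hY i j hij]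

lemma mem_sub {ρ : Fin n → Fin n → Prop} {X Y : 𝕄} (hX : X ∈ structuralMatrixAlgebra ρ)
    (hY : Y ∈ structuralMatrixAlgebra ρ) : X - Y ∈ structuralMatrixAlgebra ρ := by
  intro i j hij
  simp [Matrix.sub_apply, hX i j hij, hY i j hij]

lemma mem_smul {ρ : Fin n → Fin n → Prop} {X : 𝕄} (c : ℂ) (hX : X ∈ structuralMatrixAlgebra ρ) :
    c • X ∈ structuralMatrixAlgebra ρ := by
  intro i j hij
  simp [Matrix.smul_apply, hX i j hij]

lemma mem_mul {ρ : Fin n → Fin n → Prop} (htrans : ∀ i j k, ρ i j → ρ j k → ρ i k)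
    {X Y : 𝕄} (hX : X ∈ structuralMatrixAlgebra ρ) (hY : Y ∈ structuralMatrixAlgebra ρ) :
    X * Y ∈ structuralMatrixAlgebra ρ := by
  intro i j hij
  rw [Matrix.mul_apply]
  refine Finset.sum_eq_zero fun k _ => ?_
  by_cases h : ρ i k
  · rw [hY k j (fun hkj => hij (htrans i k j h hkj)), mul_zero]
  · rw [hX i k h, zero_mul]

lemma mem_sum {ρ : Fin n → Fin n → Prop} {ι : Type*} {s : Finset ι} {Y : ι → 𝕄}
    (hY : ∀ k ∈ s, Y k ∈ structuralMatrixAlgebra ρ) :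
    (∑ k ∈ s, Y k) ∈ structuralMatrixAlgebra ρ := by
  intro i j hij
  rw [Matrix.sum_apply]
  exact Finset.sum_eq_zero fun k hk => hY k hk i j hij

lemma mem_std {ρ : Fin n → Fin n → Prop} (hrefl : ∀ i, ρ i i) (i : Fin n) :
    Matrix.single i i (1:ℂ) ∈ structuralMatrixAlgebra ρ := by
  intro a b hab
  refine Matrix.single_apply_of_ne i i 1 a b ?_
  rintro ⟨rfl, rfl⟩
  exact hab (hrefl i)

/-! ### Standard basis idempotents -/

lemma std_idem (i : Fin n) :
    Matrix.single i i (1:ℂ) * Matrix.single i i (1:ℂ)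
      = Matrix.single i i (1:ℂ) := by
  rw [Matrix.single_mul_single_same, one_mul]

lemma std_conj {p : 𝕄} (i : Fin n) :
    Matrix.single i i (1:ℂ) * p * Matrix.single i i (1:ℂ)
      = (p i i) • Matrix.single i i (1:ℂ) := by
  ext a b
  by_cases hb : b = i
  · rw [hb, Matrix.mul_single_apply_same]
    by_cases ha : a = i
    · rw [ha, Matrix.single_mul_apply_same]
      simp
    · rw [Matrix.single_mul_apply_of_ne 1 i i a i ha]
      have h0 : Matrix.single i i (1:ℂ) a i = 0 :=
        Matrix.single_apply_of_ne i i 1 a i (fun h => ha h.1.symm)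
      simp [h0]
  · rw [Matrix.mul_single_apply_of_ne 1 i i a b hb]
    have h0 : Matrix.single i i (1:ℂ) a b = 0 :=
      Matrix.single_apply_of_ne i i 1 a b (fun h => hb h.2.symm)
    simp [h0]

lemma std_trace {p : 𝕄} (i : Fin n) :
    (p * Matrix.single i i (1:ℂ)).trace = p i i := by
  have hdiag : ∀ a, (p * Matrix.single i i (1:ℂ)) a a
      = if a = i then p i i else 0 := by
    intro a
    by_cases ha : a = i
    · rw [ha, Matrix.mul_single_apply_same]
      simp
    · rw [Matrix.mul_single_apply_of_ne 1 i i a a ha]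
      simp [ha]
  have h1 : (p * Matrix.single i i (1:ℂ)).trace
      = ∑ a, (p * Matrix.single i i (1:ℂ)) a a := by
    simp [Matrix.trace, Matrix.diag]
  rw [h1, Finset.sum_congr rfl (fun a _ => hdiag a), Finset.sum_ite_eq' Finset.univ i]
  simp

lemma std_apply_same (i : Fin n) : Matrix.single i i (1:ℂ) i i = 1 :=
  Matrix.single_apply_same i i 1

/-! ### Sums of orthogonal idempotents -/

lemma sum_idem {ι : Type*} (s : Finset ι) (y : ι → 𝕄)
    (hi : ∀ i ∈ s, y i * y i = y i)
    (ho : ∀ i ∈ s, ∀ j ∈ s, i ≠ j → y i * y j = 0) :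
    (∑ i ∈ s, y i) * (∑ i ∈ s, y i) = ∑ i ∈ s, y i := by
  rw [Finset.sum_mul]
  refine Finset.sum_congr rfl fun i hi' => ?_
  rw [Finset.mul_sum,
    Finset.sum_eq_single_of_mem i hi' (fun j hj hji => ho i hi' j hj (fun h => hji h.symm))]
  exact hi i hi' 

lemma njord_sum {ι : Type*} (s : Finset ι) (X : 𝕄) (Y : ι → 𝕄) :
    njord X (∑ k ∈ s, Y k) = ∑ k ∈ s, njord X (Y k) := by
  simp only [njord, Finset.mul_sum, Finset.sum_mul, ← Finset.sum_add_distrib, Finset.smul_sum]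

lemma expand_sub_sq (x y : 𝕄) : (x - y) * (x - y) = x*x - x*y - y*x + y*y := by noncomm_ring

lemma expand_one_sub_sq (x : 𝕄) : (1 - x) * (1 - x) = 1 - x - x + x*x := by noncomm_ring

/-! ### Splitting an idempotent of the algebra into trace-one pieces -/

lemma split_family {ρ : Fin n → Fin n → Prop} (hrefl : ∀ i, ρ i i)
    (htrans : ∀ i j k, ρ i j → ρ j k → ρ i k) :
    ∀ (k : ℕ) (p : 𝕄), p ∈ structuralMatrixAlgebra ρ → p * p = p → p.trace = (k:ℂ) →
    ∃ q : Fin k → 𝕄, (∀ i, q i ∈ structuralMatrixAlgebra ρ) ∧ (∀ i, q i * q i = q i) ∧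
      (∀ i, (q i).trace = 1) ∧ (∀ i j, i ≠ j → q i * q j = 0) ∧
      (∀ i, q i * p = q i) ∧ (∀ i, p * q i = q i) := by
  intro k
  induction k with
  | zero =>
    intro p _ _ _
    exact ⟨fun i => i.elim0, fun i => i.elim0, fun i => i.elim0, fun i => i.elim0,
      fun i => i.elim0, fun i => i.elim0, fun i => i.elim0⟩
  | succ k ih =>
    intro p hpA hpi htr
    have htr0 : ∑ a, p a a ≠ 0 := by
      have h1 : p.trace = ∑ a, p a a := by simp [Matrix.trace, Matrix.diag]
      rw [← h1, htr]
      exact Nat.cast_ne_zero.mpr (Nat.succ_ne_zero k)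
    obtain ⟨i, -, hii⟩ := Finset.exists_ne_zero_of_sum_ne_zero htr0
    set Eb := Matrix.single i i (1:ℂ) with hEb
    set c := p i i with hc
    set q0 : 𝕄 := c⁻¹ • (p * Eb * p) with hq0
    have hq0A : q0 ∈ structuralMatrixAlgebra ρ :=
      mem_smul _ (mem_mul htrans (mem_mul htrans hpA (mem_std hrefl i)) hpA)
    have hEpE : Eb * p * Eb = c • Eb := std_conj i
    have hkey : (p * Eb * p) * (p * Eb * p) = c • (p * Eb * p) := by
      have h1 : (p * Eb * p) * (p * Eb * p) = p * (Eb * (p * p) * Eb) * p := by noncomm_ring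
      rw [h1, hpi, hEpE, Matrix.mul_smul, Matrix.smul_mul]
    have hq0idem : q0 * q0 = q0 := by
      rw [hq0, Matrix.smul_mul, Matrix.mul_smul, hkey, smul_smul, smul_smul,
        mul_assoc, inv_mul_cancel₀ hii, mul_one]
    have htrq0 : q0.trace = 1 := by
      have h1 : (p * Eb * p).trace = (p * Eb).trace := by
        rw [Matrix.trace_mul_comm (p * Eb) p, ← Matrix.mul_assoc, hpi]
      rw [hq0, Matrix.trace_smul, h1, std_trace, smul_eq_mul, inv_mul_cancel₀ hii]
    have hq0p : q0 * p = q0 := by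
      rw [hq0, Matrix.smul_mul]
      congr 1
      rw [Matrix.mul_assoc, hpi]
    have hpq0 : p * q0 = q0 := by
      rw [hq0, Matrix.mul_smul]
      congr 1
      rw [← Matrix.mul_assoc, ← Matrix.mul_assoc, hpi]
    set p' := p - q0 with hp'
    have hp'A : p' ∈ structuralMatrixAlgebra ρ := mem_sub hpA hq0A
    have hp'i : p' * p' = p' := by
      rw [hp', sub_mul, mul_sub, mul_sub, hpi, hpq0, hq0p, hq0idem]
      abel
    have hp'tr : p'.trace = (k:ℂ) := by
      rw [hp', Matrix.trace_sub, htr, htrq0]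
      push_cast
      ring
    obtain ⟨qs, hqsA, hqsi, hqstr, hqso, hqsp, hpqs⟩ := ih p' hp'A hp'i hp'tr
    have hq0p' : q0 * p' = 0 := by rw [hp', mul_sub, hq0p, hq0idem, sub_self]
    have hp'q0 : p' * q0 = 0 := by rw [hp', sub_mul, hpq0, hq0idem, sub_self]
    have hq0qs : ∀ j, q0 * qs j = 0 := by
      intro j
      rw [← hpqs j, ← Matrix.mul_assoc, hq0p', Matrix.zero_mul]
    have hqsq0 : ∀ j, qs j * q0 = 0 := by
      intro j
      rw [← hqsp j, Matrix.mul_assoc, hp'q0, Matrix.mul_zero]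
    have hqsP : ∀ j, qs j * p = qs j := by
      intro j
      have : p = p' + q0 := by rw [hp']; abel
      rw [this, mul_add, hqsp, hqsq0, add_zero]
    have hPqs : ∀ j, p * qs j = qs j := by
      intro j
      have : p = p' + q0 := by rw [hp']; abel
      rw [this, add_mul, hpqs, hq0qs, add_zero]
    refine ⟨Fin.cons q0 qs, ?_, ?_, ?_, ?_, ?_, ?_⟩
    · intro j
      refine Fin.cases ?_ (fun j' => ?_) j
      · simpa using hq0A
      · simpa using hqsA j'
    · intro j
      refine Fin.cases ?_ (fun j' => ?_) j
      · simpa using hq0idem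
      · simpa using hqsi j'
    · intro j
      refine Fin.cases ?_ (fun j' => ?_) j
      · simpa using htrq0
      · simpa using hqstr j'
    · intro j l hjl
      rcases Fin.eq_zero_or_eq_succ j with rfl | ⟨j', rfl⟩ <;>
        rcases Fin.eq_zero_or_eq_succ l with rfl | ⟨l', rfl⟩
      · exact absurd rfl hjl
      · simpa using hq0qs l'
      · simpa using hqsq0 j'
      · have hne : j' ≠ l' := fun h => hjl (congrArg Fin.succ h)
        simpa using hqso j' l' hne
    · intro j
      refine Fin.cases ?_ (fun j' => ?_) j
      · simpa using hq0p
      · simpa using hqsP j'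
    · intro j
      refine Fin.cases ?_ (fun j' => ?_) j
      · simpa using hpq0
      · simpa using hPqs j'

end SMAux

/-- For an injective map on a structural matrix algebra preserving
the normalized Jordan product, and mutually orthogonal idempotents `P₁, …, P_r`
with scalars `λ₁, …, λ_r`, we have `φ(Σ λⱼ Pⱼ) = Σ φ(λⱼ Pⱼ)`. -/
theorem jordan_mult_map_additive_on_orth_combos {n : ℕ} (ρ : Fin n → Fin n → Prop)
    (hrefl : ∀ i, ρ i i) (htrans : ∀ i j k, ρ i j → ρ j k → ρ i k)
    (φ : Matrix (Fin n) (Fin n) ℂ → Matrix (Fin n) (Fin n) ℂ)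
    (hinj : Set.InjOn φ (structuralMatrixAlgebra ρ))
    (hjord : ∀ X ∈ structuralMatrixAlgebra ρ, ∀ Y ∈ structuralMatrixAlgebra ρ,
      φ (njord X Y) = njord (φ X) (φ Y))
    (r : ℕ) (P : Fin r → Matrix (Fin n) (Fin n) ℂ)
    (hPA : ∀ k, P k ∈ structuralMatrixAlgebra ρ)
    (hidem : ∀ k, P k * P k = P k)
    (horth : ∀ k l, k ≠ l → P k * P l = 0)
    (lam : Fin r → ℂ) :
    φ (∑ k, lam k • P k) = ∑ k, φ (lam k • P k) := by
  classical
  have hA0 : (0:Matrix (Fin n) (Fin n) ℂ) ∈ structuralMatrixAlgebra ρ := SMAux.mem_zero ρ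
  have hA1 : (1:Matrix (Fin n) (Fin n) ℂ) ∈ structuralMatrixAlgebra ρ := SMAux.mem_one hrefl
  -- Jordan product workhorse in ring form
  have hpair : ∀ X ∈ structuralMatrixAlgebra ρ, ∀ Y ∈ structuralMatrixAlgebra ρ,
      ∀ W, X * Y + Y * X = W + W → φ X * φ Y + φ Y * φ X = φ W + φ W := by
    intro X hX Y hY W hW
    have h := hjord X hX Y hY
    rw [SMAux.njord_eq_iff.mpr hW] at h
    exact SMAux.njord_eq_iff.mp h.symm
  have hsq : ∀ X ∈ structuralMatrixAlgebra ρ, X * X = X → φ X * φ X = φ X := by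
    intro X hX hXX
    exact SMAux.dbl_cancel (hpair X hX X hX X (by rw [hXX]))
  -- Step B : φ 0 = 0
  have hphi0 : φ 0 = 0 := by
    have hZi : φ 0 * φ 0 = φ 0 := hsq 0 hA0 (by rw [mul_zero])
    have hEbA : ∀ i : Fin n, Matrix.single i i (1:ℂ) ∈ structuralMatrixAlgebra ρ :=
      fun i => SMAux.mem_std hrefl i
    have hF : ∀ i, φ (Matrix.single i i (1:ℂ)) * φ (Matrix.single i i (1:ℂ))
        = φ (Matrix.single i i (1:ℂ)) := fun i => hsq _ (hEbA i) (SMAux.std_idem i)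
    have hZF : ∀ i, φ 0 * φ (Matrix.single i i (1:ℂ)) = φ 0 ∧
        φ (Matrix.single i i (1:ℂ)) * φ 0 = φ 0 := by
      intro i
      exact SMAux.corner_of_jord hZi (hpair 0 hA0 _ (hEbA i) 0 (by simp))
    have hψi : ∀ i : Fin n, (φ (Matrix.single i i (1:ℂ)) - φ 0) *
        (φ (Matrix.single i i (1:ℂ)) - φ 0)
        = φ (Matrix.single i i (1:ℂ)) - φ 0 := by
      intro i
      rw [SMAux.expand_sub_sq, hF i, (hZF i).2, (hZF i).1, hZi]
      abel
    have hψZ : ∀ i : Fin n, φ 0 * (φ (Matrix.single i i (1:ℂ)) - φ 0) = 0 ∧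
        (φ (Matrix.single i i (1:ℂ)) - φ 0) * φ 0 = 0 := by
      intro i
      constructor
      · rw [mul_sub, (hZF i).1, hZi, sub_self]
      · rw [sub_mul, (hZF i).2, hZi, sub_self]
    have hψo : ∀ i j : Fin n, i ≠ j →
        (φ (Matrix.single i i (1:ℂ)) - φ 0) *
          (φ (Matrix.single j j (1:ℂ)) - φ 0) = 0 := by
      intro i j hij
      have horth0 : Matrix.single i i (1:ℂ) * Matrix.single j j (1:ℂ) +
          Matrix.single j j (1:ℂ) * Matrix.single i i (1:ℂ) = 0 + 0 := by
        rw [Matrix.single_mul_single_of_ne 1 i i j hij, Matrix.single_mul_single_of_ne 1 j j i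
          (Ne.symm hij)]
      have hFij := hpair _ (hEbA i) _ (hEbA j) 0 horth0
      have hkey : (φ (Matrix.single i i (1:ℂ)) - φ 0) *
            (φ (Matrix.single j j (1:ℂ)) - φ 0) +
          (φ (Matrix.single j j (1:ℂ)) - φ 0) *
            (φ (Matrix.single i i (1:ℂ)) - φ 0) = 0 := by
        have expand : (φ (Matrix.single i i (1:ℂ)) - φ 0) *
              (φ (Matrix.single j j (1:ℂ)) - φ 0) +
            (φ (Matrix.single j j (1:ℂ)) - φ 0) *
              (φ (Matrix.single i i (1:ℂ)) - φ 0)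
            = (φ (Matrix.single i i (1:ℂ)) * φ (Matrix.single j j (1:ℂ)) +
               φ (Matrix.single j j (1:ℂ)) * φ (Matrix.single i i (1:ℂ)))
              - (φ (Matrix.single i i (1:ℂ)) * φ 0)
              - (φ 0 * φ (Matrix.single j j (1:ℂ)))
              - (φ (Matrix.single j j (1:ℂ)) * φ 0)
              - (φ 0 * φ (Matrix.single i i (1:ℂ)))
              + (φ 0 * φ 0) + (φ 0 * φ 0) := by noncomm_ring
        rw [expand, hFij, (hZF i).2, (hZF i).1, (hZF j).2, (hZF j).1, hZi]
        abel
      exact (SMAux.orth_of_jord_zero (hψi i) hkey).1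
    -- trace count
    have hWi := SMAux.sum_idem Finset.univ
      (fun i : Fin n => φ (Matrix.single i i (1:ℂ)) - φ 0)
      (fun i _ => hψi i) (fun i _ j _ hij => hψo i j hij)
    have hZW : φ 0 * (∑ i : Fin n, (φ (Matrix.single i i (1:ℂ)) - φ 0)) = 0 := by
      rw [Finset.mul_sum]
      exact Finset.sum_eq_zero fun i _ => (hψZ i).1
    have hWZ : (∑ i : Fin n, (φ (Matrix.single i i (1:ℂ)) - φ 0)) * φ 0 = 0 := by
      rw [Finset.sum_mul]
      exact Finset.sum_eq_zero fun i _ => (hψZ i).2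
    have hsi : (φ 0 + ∑ i : Fin n, (φ (Matrix.single i i (1:ℂ)) - φ 0)) *
        (φ 0 + ∑ i : Fin n, (φ (Matrix.single i i (1:ℂ)) - φ 0))
        = φ 0 + ∑ i : Fin n, (φ (Matrix.single i i (1:ℂ)) - φ 0) := by
      rw [add_mul, mul_add, mul_add, hZi, hWi, hZW, hWZ]
      abel
    have hci : (1 - (φ 0 + ∑ i : Fin n, (φ (Matrix.single i i (1:ℂ)) - φ 0))) *
        (1 - (φ 0 + ∑ i : Fin n, (φ (Matrix.single i i (1:ℂ)) - φ 0)))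
        = 1 - (φ 0 + ∑ i : Fin n, (φ (Matrix.single i i (1:ℂ)) - φ 0)) := by
      rw [SMAux.expand_one_sub_sq, hsi]
      abel
    obtain ⟨kZ, hkZ, hkZ0⟩ := SMAux.idem_trace_nat hZi
    obtain ⟨kc, hkc, -⟩ := SMAux.idem_trace_nat hci
    choose kψ hkψ hkψ0 using fun i : Fin n => SMAux.idem_trace_nat (hψi i)
    have hψne : ∀ i, kψ i ≠ 0 := by
      intro i h0
      have h1 : φ (Matrix.single i i (1:ℂ)) = φ 0 := sub_eq_zero.mp (hkψ0 i h0)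
      have h3 : Matrix.single i i (1:ℂ) = 0 := hinj (hEbA i) hA0 h1
      have h4 := SMAux.std_apply_same (n := n) i
      rw [h3] at h4
      simpa using h4
    have e1 : (n:ℂ) = Matrix.trace (1 - (φ 0 + ∑ i : Fin n,
        (φ (Matrix.single i i (1:ℂ)) - φ 0))) + Matrix.trace (φ 0) +
        ∑ i : Fin n, Matrix.trace (φ (Matrix.single i i (1:ℂ)) - φ 0) := by
      rw [← Matrix.trace_sum, ← Matrix.trace_add, ← Matrix.trace_add]
      have heq : (1 - (φ 0 + ∑ i : Fin n, (φ (Matrix.single i i (1:ℂ)) - φ 0))) + φ 0 +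
          ∑ i : Fin n, (φ (Matrix.single i i (1:ℂ)) - φ 0)
          = (1 : Matrix (Fin n) (Fin n) ℂ) := by abel
      rw [heq, Matrix.trace_one, Fintype.card_fin]
    rw [hkc, hkZ] at e1
    have e2 : ∑ i : Fin n, Matrix.trace (φ (Matrix.single i i (1:ℂ)) - φ 0)
        = ((∑ i, kψ i : ℕ) : ℂ) := by
      push_cast
      exact Finset.sum_congr rfl fun i _ => hkψ i
    rw [e2] at e1
    have e3 : n = kc + kZ + ∑ i, kψ i := by exact_mod_cast e1
    have e4 : n ≤ ∑ i, kψ i := by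
      calc n = ∑ _i : Fin n, 1 := by simp
        _ ≤ ∑ i, kψ i := Finset.sum_le_sum fun i _ => Nat.one_le_iff_ne_zero.mpr (hψne i)
    exact hkZ0 (by omega)
  -- Step D : trace grows under φ on idempotents of the algebra
  have Dmain : ∀ p ∈ structuralMatrixAlgebra ρ, p * p = p →
      ∃ kp kf : ℕ, Matrix.trace p = (kp:ℂ) ∧ Matrix.trace (φ p) = (kf:ℂ) ∧ kp ≤ kf := by
    intro p hpA hpi
    obtain ⟨kp, hkp, -⟩ := SMAux.idem_trace_nat hpi
    obtain ⟨q, hqA, hqi, hqtr, hqo, hqp, hpq⟩ :=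
      SMAux.split_family hrefl htrans kp p hpA hpi hkp
    have hfidem : φ p * φ p = φ p := hsq p hpA hpi
    have hyi : ∀ i, φ (q i) * φ (q i) = φ (q i) := fun i => hsq _ (hqA i) (hqi i)
    have hyo : ∀ i j, i ≠ j → φ (q i) * φ (q j) = 0 := by
      intro i j hij
      have h0 : q i * q j + q j * q i = 0 + 0 := by
        rw [hqo i j hij, hqo j i (Ne.symm hij), add_zero]
      have h1 := hpair (q i) (hqA i) (q j) (hqA j) 0 h0
      rw [hphi0] at h1
      rw [add_zero] at h1
      exact (SMAux.orth_of_jord_zero (hyi i) h1).1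
    have hyf : ∀ i, φ p * φ (q i) = φ (q i) ∧ φ (q i) * φ p = φ (q i) := by
      intro i
      have h0 : p * q i + q i * p = q i + q i := by rw [hpq i, hqp i]
      exact SMAux.unit_of_jord_self hfidem (hpair p hpA (q i) (hqA i) (q i) h0)
    have hti := SMAux.sum_idem Finset.univ (fun i => φ (q i))
      (fun i _ => hyi i) (fun i _ j _ h => hyo i j h)
    have hft : φ p * (∑ i, φ (q i)) = ∑ i, φ (q i) := by
      rw [Finset.mul_sum]
      exact Finset.sum_congr rfl fun i _ => (hyf i).1
    have htf : (∑ i, φ (q i)) * φ p = ∑ i, φ (q i) := by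
      rw [Finset.sum_mul]
      exact Finset.sum_congr rfl fun i _ => (hyf i).2
    have hei : (φ p - ∑ i, φ (q i)) * (φ p - ∑ i, φ (q i)) = φ p - ∑ i, φ (q i) := by
      rw [SMAux.expand_sub_sq, hfidem, hft, htf, hti]
      abel
    obtain ⟨ke, hke, -⟩ := SMAux.idem_trace_nat hei
    choose ky hky hky0 using fun i => SMAux.idem_trace_nat (hyi i)
    have hkyne : ∀ i, ky i ≠ 0 := by
      intro i h0
      have h1 : φ (q i) = φ 0 := by rw [hky0 i h0, hphi0]
      have h2 : q i = 0 := hinj (hqA i) hA0 h1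
      have h3 := hqtr i
      rw [h2] at h3
      simpa using h3
    refine ⟨kp, (∑ i, ky i) + ke, hkp, ?_, ?_⟩
    · have e1 : Matrix.trace (φ p) = ∑ i, Matrix.trace (φ (q i)) +
          Matrix.trace (φ p - ∑ i, φ (q i)) := by
        rw [← Matrix.trace_sum, ← Matrix.trace_add]
        congr 1
        abel
      rw [e1, hke, Finset.sum_congr rfl (fun i _ => hky i)]
      push_cast
      ring
    · calc kp = ∑ _i : Fin kp, 1 := by simp
        _ ≤ ∑ i, ky i := Finset.sum_le_sum fun i _ => Nat.one_le_iff_ne_zero.mpr (hkyne i)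
        _ ≤ _ := Nat.le_add_right _ _
  -- Step E : pairwise additivity on orthogonal idempotents
  have hpairadd : ∀ p ∈ structuralMatrixAlgebra ρ, ∀ q ∈ structuralMatrixAlgebra ρ,
      p * p = p → q * q = q → p * q = 0 → q * p = 0 → φ (p + q) = φ p + φ q := by
    intro p hpA q hqA hpi hqi hpq hqp
    have hpqA : p + q ∈ structuralMatrixAlgebra ρ := SMAux.mem_add hpA hqA
    have hpqi : (p + q) * (p + q) = p + q := by
      rw [add_mul, mul_add, mul_add, hpi, hqi, hpq, hqp]
      abel
    have hsA : (1 - (p + q)) ∈ structuralMatrixAlgebra ρ := SMAux.mem_sub hA1 hpqA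
    have hsi : (1 - (p+q)) * (1 - (p+q)) = 1 - (p+q) := by
      rw [SMAux.expand_one_sub_sq, hpqi]
      abel
    have hfi := hsq p hpA hpi
    have hgi := hsq q hqA hqi
    have hhi := hsq _ hpqA hpqi
    have hmi := hsq _ hsA hsi
    have hfg : φ p * φ q = 0 ∧ φ q * φ p = 0 := by
      have h0 : p * q + q * p = 0 + 0 := by rw [hpq, hqp, add_zero]
      have h1 := hpair p hpA q hqA 0 h0
      rw [hphi0] at h1
      rw [add_zero] at h1
      exact SMAux.orth_of_jord_zero hfi h1
    have hhf : φ (p+q) * φ p = φ p ∧ φ p * φ (p+q) = φ p := by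
      have h0 : (p+q) * p + p * (p+q) = p + p := by
        rw [add_mul, mul_add, hpi, hqp, hpq]
        abel
      exact SMAux.unit_of_jord_self hhi (hpair (p+q) hpqA p hpA p h0)
    have hhg : φ (p+q) * φ q = φ q ∧ φ q * φ (p+q) = φ q := by
      have h0 : (p+q) * q + q * (p+q) = q + q := by
        rw [add_mul, mul_add, hqi, hqp, hpq]
        abel
      exact SMAux.unit_of_jord_self hhi (hpair (p+q) hpqA q hqA q h0)
    have hf'h : φ (p+q) * φ (1 - (p+q)) = 0 ∧ φ (1 - (p+q)) * φ (p+q) = 0 := by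
      have h0 : (p+q) * (1 - (p+q)) + (1 - (p+q)) * (p+q) = 0 + 0 := by
        rw [mul_sub, sub_mul, mul_one, one_mul, hpqi]
        abel
      have h1 := hpair (p+q) hpqA (1 - (p+q)) hsA 0 h0
      rw [hphi0] at h1
      rw [add_zero] at h1
      exact SMAux.orth_of_jord_zero hhi h1
    have hei : (φ (p+q) - φ p - φ q) * (φ (p+q) - φ p - φ q) = φ (p+q) - φ p - φ q := by
      have expand : (φ (p+q) - φ p - φ q) * (φ (p+q) - φ p - φ q)
          = (φ (p+q) * φ (p+q)) - (φ (p+q) * φ p) - (φ (p+q) * φ q)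
            - (φ p * φ (p+q)) + (φ p * φ p) + (φ p * φ q)
            - (φ q * φ (p+q)) + (φ q * φ p) + (φ q * φ q) := by noncomm_ring
      rw [expand, hhi, hhf.1, hhg.1, hhf.2, hfi, hfg.1, hhg.2, hfg.2, hgi]
      abel
    have hmi2 : (1 - φ (p+q)) * (1 - φ (p+q)) = 1 - φ (p+q) := by
      rw [SMAux.expand_one_sub_sq, hhi]
      abel
    have hf'm : (1 - φ (p+q)) * φ (1 - (p+q)) = φ (1 - (p+q)) ∧
        φ (1 - (p+q)) * (1 - φ (p+q)) = φ (1 - (p+q)) := by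
      constructor
      · rw [sub_mul, one_mul, hf'h.1, sub_zero]
      · rw [mul_sub, mul_one, hf'h.2, sub_zero]
    have hmm'i : ((1 - φ (p+q)) - φ (1 - (p+q))) * ((1 - φ (p+q)) - φ (1 - (p+q)))
        = (1 - φ (p+q)) - φ (1 - (p+q)) := by
      rw [SMAux.expand_sub_sq, hmi2, hf'm.1, hf'm.2, hmi]
      abel
    obtain ⟨kp, kf, hkp, hkf, hkpf⟩ := Dmain p hpA hpi
    obtain ⟨kq, kg, hkq, hkg, hkqg⟩ := Dmain q hqA hqi
    obtain ⟨ks, kf', hks, hkf', hksf'⟩ := Dmain _ hsA hsi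
    obtain ⟨ke, hke, hke0⟩ := SMAux.idem_trace_nat hei
    obtain ⟨km, hkm, -⟩ := SMAux.idem_trace_nat hmm'i
    have e0 : ((ks + kp + kq : ℕ):ℂ) = (n:ℂ) := by
      push_cast
      rw [← hks, ← hkp, ← hkq, ← Matrix.trace_add, ← Matrix.trace_add]
      have heq : (1 - (p+q)) + p + q = (1 : Matrix (Fin n) (Fin n) ℂ) := by abel
      rw [heq, Matrix.trace_one, Fintype.card_fin]
    have e0' : ks + kp + kq = n := by exact_mod_cast e0
    have e1 : ((kf + kg + ke + kf' + km : ℕ):ℂ) = (n:ℂ) := by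
      push_cast
      rw [← hkf, ← hkg, ← hke, ← hkf', ← hkm]
      rw [← Matrix.trace_add, ← Matrix.trace_add, ← Matrix.trace_add, ← Matrix.trace_add]
      have heq : φ p + φ q + (φ (p+q) - φ p - φ q) + φ (1 - (p+q)) +
          ((1 - φ (p+q)) - φ (1 - (p+q))) = (1 : Matrix (Fin n) (Fin n) ℂ) := by abel
      rw [heq, Matrix.trace_one, Fintype.card_fin]
    have e1' : kf + kg + ke + kf' + km = n := by exact_mod_cast e1
    have heke : ke = 0 := by omega
    have he0 : φ (p+q) - φ p - φ q = 0 := hke0 heke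
    rw [sub_sub] at he0
    exact sub_eq_zero.mp he0
  -- Step F : additivity on sums of the orthogonal idempotents P
  have Fsum : ∀ s : Finset (Fin r), φ (∑ k ∈ s, P k) = ∑ k ∈ s, φ (P k) := by
    intro s
    induction s using Finset.induction_on with
    | empty => simpa using hphi0
    | @insert a s ha ih =>
      have huA : (∑ k ∈ s, P k) ∈ structuralMatrixAlgebra ρ :=
        SMAux.mem_sum (fun k _ => hPA k)
      have hui : (∑ k ∈ s, P k) * (∑ k ∈ s, P k) = ∑ k ∈ s, P k :=
        SMAux.sum_idem s P (fun i _ => hidem i) (fun i _ j _ hij => horth i j hij)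
      have hau : P a * (∑ k ∈ s, P k) = 0 := by
        rw [Finset.mul_sum]
        exact Finset.sum_eq_zero fun k hk => horth a k (fun h => ha (by rw [h]; exact hk))
      have hua : (∑ k ∈ s, P k) * P a = 0 := by
        rw [Finset.sum_mul]
        exact Finset.sum_eq_zero fun k hk => horth k a (fun h => ha (by rw [← h]; exact hk))
      rw [Finset.sum_insert ha, Finset.sum_insert ha,
        hpairadd (P a) (hPA a) _ huA (hidem a) hui hau hua, ih]
  -- Step G : conclusion
  have hEA : (∑ k, P k) ∈ structuralMatrixAlgebra ρ := SMAux.mem_sum fun k _ => hPA k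
  have hSA : (∑ k, lam k • P k) ∈ structuralMatrixAlgebra ρ :=
    SMAux.mem_sum fun k _ => SMAux.mem_smul _ (hPA k)
  have hSE : njord (∑ k, lam k • P k) (∑ k, P k) = ∑ k, lam k • P k := by
    refine SMAux.njord_eq_iff.mpr ?_
    have h1 : (∑ k, lam k • P k) * (∑ k, P k) = ∑ k, lam k • P k := by
      rw [Finset.sum_mul]
      refine Finset.sum_congr rfl fun j _ => ?_
      rw [Finset.mul_sum, Finset.sum_eq_single_of_mem j (Finset.mem_univ j)
        (fun k _ hkj => by rw [Matrix.smul_mul, horth j k (fun h => hkj h.symm), smul_zero]),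
        Matrix.smul_mul, hidem j]
    have h2 : (∑ k, P k) * (∑ k, lam k • P k) = ∑ k, lam k • P k := by
      rw [Finset.mul_sum]
      refine Finset.sum_congr rfl fun j _ => ?_
      rw [Finset.sum_mul, Finset.sum_eq_single_of_mem j (Finset.mem_univ j)
        (fun k _ hkj => by rw [Matrix.mul_smul, horth k j hkj, smul_zero]),
        Matrix.mul_smul, hidem j]
    rw [h1, h2]
  have hSP : ∀ j, njord (∑ k, lam k • P k) (P j) = lam j • P j := by
    intro j
    refine SMAux.njord_eq_iff.mpr ?_
    have h1 : (∑ k, lam k • P k) * P j = lam j • P j := by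
      rw [Finset.sum_mul, Finset.sum_eq_single_of_mem j (Finset.mem_univ j)
        (fun k _ hkj => by rw [Matrix.smul_mul, horth k j hkj, smul_zero]),
        Matrix.smul_mul, hidem j]
    have h2 : P j * (∑ k, lam k • P k) = lam j • P j := by
      rw [Finset.mul_sum, Finset.sum_eq_single_of_mem j (Finset.mem_univ j)
        (fun k _ hkj => by rw [Matrix.mul_smul, horth j k (fun h => hkj h.symm), smul_zero]),
        Matrix.mul_smul, hidem j]
    rw [h1, h2]
  calc φ (∑ k, lam k • P k)
      = φ (njord (∑ k, lam k • P k) (∑ k, P k)) := by rw [hSE]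
    _ = njord (φ (∑ k, lam k • P k)) (φ (∑ k, P k)) := hjord _ hSA _ hEA
    _ = njord (φ (∑ k, lam k • P k)) (∑ k, φ (P k)) := by rw [Fsum Finset.univ]
    _ = ∑ k, njord (φ (∑ k, lam k • P k)) (φ (P k)) := SMAux.njord_sum _ _ _
    _ = ∑ k, φ (njord (∑ k, lam k • P k) (P k)) := by
        refine Finset.sum_congr rfl fun k _ => ?_
        rw [← hjord _ hSA _ (hPA k)]
    _ = ∑ k, φ (lam k • P k) := by
        refine Finset.sum_congr rfl fun k _ => ?_
        rw [hSP k]
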